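/- Large deviations limit of the Rao bound (main convergence theorem): let s_1,…,s_σ ≥ 2 be integers, a_1,…,a_σ > 0 with ∑ a_i = 1, and μ ∈ (0,1). For each n let l_1^{(n)},…,l_σ^{(n)} ∈ ℕ with ∑_i l_i^{(n)} = n and l_i^{(n)}/n → a_i, let b_n and r_n be the corresponding block and running-cost functions, and let T_n ∈ ℕ with T_n/n → μ/2. Then lim_{n→∞} (1/n) log ( ∑_{x ∈ {0,1}^n with S(x) ≤ T_n} ∏_{j=1}^n r_n(x_j, j) ) = sup { ∑_{i=1}^σ a_i ( θ_i log(s_i − 1) + H(θ_i) ) : θ ∈ (0,1)^σ, ∑_{i=1}^σ a_i θ_i = μ/2 }. -/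

import Mathlib

open Finset

/-- The entropy function `H(θ) = -θ log θ - (1-θ) log(1-θ)`. -/
noncomputable def Hent (θ : ℝ) : ℝ := -θ * Real.log θ - (1 - θ) * Real.log (1 - θ)

namespace RaoProof
open Real Filter Topology

lemma gibbs {w lam θ : ℝ} (hw : 1 ≤ w) (hθ : θ ∈ Set.Ioo (0:ℝ) 1) :
    θ * Real.log w + Hent θ ≤ Real.log (1 + w * Real.exp lam) - lam * θ := by
  obtain ⟨hθ0, hθ1⟩ := hθ
  have hθ1' : 0 < 1 - θ := by linarith
  have hE : 0 < Real.exp lam := Real.exp_pos lam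
  have hw0 : 0 < w := by linarith
  have hZ : 0 < 1 + w * Real.exp lam := by positivity
  have h1 : Real.log (w * Real.exp lam / (θ * (1 + w * Real.exp lam)))
      ≤ w * Real.exp lam / (θ * (1 + w * Real.exp lam)) - 1 :=
    log_le_sub_one_of_pos (by positivity)
  have h2 : Real.log (1 / ((1 - θ) * (1 + w * Real.exp lam)))
      ≤ 1 / ((1 - θ) * (1 + w * Real.exp lam)) - 1 :=
    log_le_sub_one_of_pos (by positivity)
  have e1 : Real.log (w * Real.exp lam / (θ * (1 + w * Real.exp lam)))
      = Real.log w + lam - Real.log θ - Real.log (1 + w * Real.exp lam) := by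
    rw [Real.log_div (by positivity) (by positivity),
      Real.log_mul (by positivity) (by positivity),
      Real.log_mul (by positivity) (by positivity), Real.log_exp]
    ring
  have e2 : Real.log (1 / ((1 - θ) * (1 + w * Real.exp lam)))
      = -Real.log (1 - θ) - Real.log (1 + w * Real.exp lam) := by
    rw [Real.log_div one_ne_zero (by positivity),
      Real.log_mul (by positivity) (by positivity), Real.log_one]
    ring
  have k1 := mul_le_mul_of_nonneg_left h1 hθ0.le
  have k2 := mul_le_mul_of_nonneg_left h2 hθ1'.le
  have h3 : θ ≠ 0 := hθ0.ne'
  have h4 : (1 - θ) ≠ 0 := hθ1'.ne'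
  have h5 : (1 + w * Real.exp lam) ≠ 0 := hZ.ne'
  have key : θ * (w * Real.exp lam / (θ * (1 + w * Real.exp lam)) - 1)
      + (1 - θ) * (1 / ((1 - θ) * (1 + w * Real.exp lam)) - 1) = 0 := by
    field_simp
    ring
  rw [e1] at k1; rw [e2] at k2
  simp only [Hent]
  nlinarith [k1, k2, key]

lemma theta_eq {w lam : ℝ} (hw : 1 ≤ w) :
    (w * Real.exp lam / (1 + w * Real.exp lam)) * Real.log w
      + Hent (w * Real.exp lam / (1 + w * Real.exp lam))
    = Real.log (1 + w * Real.exp lam)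
      - lam * (w * Real.exp lam / (1 + w * Real.exp lam)) := by
  have hE : 0 < Real.exp lam := Real.exp_pos lam
  have hw0 : 0 < w := by linarith
  have hZ : 0 < 1 + w * Real.exp lam := by positivity
  set E := Real.exp lam with hEdef
  set Z := 1 + w * E with hZdef
  have h1 : 1 - w * E / Z = 1 / Z := by
    field_simp
    rw [hZdef]; ring
  have h2 : Real.log (w * E / Z) = Real.log w + lam - Real.log Z := by
    rw [Real.log_div (by positivity) hZ.ne', Real.log_mul hw0.ne' hE.ne', hEdef, Real.log_exp]
  have h3 : Real.log (1 / Z) = -Real.log Z := by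
    rw [Real.log_div one_ne_zero hZ.ne', Real.log_one]; ring
  simp only [Hent, h1, h2, h3]
  have h4 : w * E / Z + 1 / Z = 1 := by
    field_simp
    rw [hZdef]; ring
  linear_combination Real.log Z * h4

lemma theta_mem {w lam : ℝ} (hw : 1 ≤ w) :
    w * Real.exp lam / (1 + w * Real.exp lam) ∈ Set.Ioo (0:ℝ) 1 := by
  have hE : 0 < Real.exp lam := Real.exp_pos lam
  have hw0 : 0 < w := by linarith
  constructor
  · positivity
  · rw [div_lt_one (by positivity)]; linarith

lemma stirling_err :
    Tendsto (fun N : ℕ => (Real.log N.factorial - N * Real.log N + N) / N) atTop (𝓝 0) := by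
  have hpi : (0:ℝ) < √π := Real.sqrt_pos.2 Real.pi_pos
  have hlog : Tendsto (fun N : ℕ => Real.log (Stirling.stirlingSeq N)) atTop (𝓝 (Real.log (√π))) :=
    (Real.continuousAt_log hpi.ne').tendsto.comp Stirling.tendsto_stirlingSeq_sqrt_pi
  have h1 : Tendsto (fun N : ℕ => Real.log (Stirling.stirlingSeq N) / N) atTop (𝓝 0) :=
    hlog.div_atTop tendsto_natCast_atTop_atTop
  have h2N : Tendsto (fun N : ℕ => (2:ℝ) * N) atTop atTop :=
    Tendsto.const_mul_atTop two_pos tendsto_natCast_atTop_atTop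
  have h2 : Tendsto (fun N : ℕ => Real.log (2 * N) / (2 * (N:ℝ))) atTop (𝓝 0) :=
    (Real.isLittleO_log_id_atTop.comp_tendsto h2N).tendsto_div_nhds_zero
  have h3 : Tendsto (fun N : ℕ => Real.log (2 * N) / N) atTop (𝓝 0) := by
    have := h2.const_mul (2:ℝ)
    simp only [mul_zero] at this
    refine this.congr (fun N => ?_)
    rw [mul_div_assoc']
    exact mul_div_mul_left _ _ two_ne_zero
  have key : (fun N : ℕ => Real.log (Stirling.stirlingSeq N) / N + 1 / 2 * (Real.log (2 * N) / N))
      =ᶠ[atTop] (fun N : ℕ => (Real.log N.factorial - N * Real.log N + N) / N) := by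
    filter_upwards [eventually_ge_atTop 1] with N hN
    have hN0 : (0:ℝ) < N := by exact_mod_cast hN
    have hf := Stirling.log_stirlingSeq_formula N
    have hdiv : Real.log ((N:ℝ) / Real.exp 1) = Real.log N - 1 := by
      rw [Real.log_div hN0.ne' (Real.exp_ne_zero 1), Real.log_exp]
    rw [hf, hdiv]
    field_simp
    ring
  have := (h1.add (h3.const_mul (1/2 : ℝ))).congr' key
  simpa using this

lemma log_choose_tendsto {l t : ℕ → ℕ} {α θ : ℝ} (hα : 0 < α) (hθ : θ ∈ Set.Ioo (0:ℝ) 1)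
    (hl : Tendsto (fun m => (l m : ℝ) / m) atTop (𝓝 α))
    (ht : Tendsto (fun m => (t m : ℝ) / (l m)) atTop (𝓝 θ))
    (hle : ∀ m, t m ≤ l m) :
    Tendsto (fun m => Real.log ((l m).choose (t m)) / m) atTop (𝓝 (α * Hent θ)) := by
  obtain ⟨hθ0, hθ1⟩ := hθ
  set u : ℕ → ℕ := fun m => l m - t m with hu
  have hcast : ∀ m, (u m : ℝ) = (l m : ℝ) - (t m : ℝ) := by
    intro m; exact_mod_cast Nat.cast_sub (hle m)
  -- l tends to infinity
  have hlR : Tendsto (fun m => (l m : ℝ)) atTop atTop := by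
    refine (Tendsto.pos_mul_atTop hα hl tendsto_natCast_atTop_atTop).congr' ?_
    filter_upwards [eventually_ge_atTop 1] with m hm
    have : ((m:ℝ)) ≠ 0 := by positivity
    field_simp
  have hlN : Tendsto l atTop atTop := tendsto_natCast_atTop_iff.1 hlR
  have hl1 : ∀ᶠ m in atTop, 1 ≤ l m := hlN.eventually_ge_atTop 1
  -- t / m
  have htm : Tendsto (fun m => (t m : ℝ) / m) atTop (𝓝 (θ * α)) := by
    refine (ht.mul hl).congr' ?_
    filter_upwards [hl1] with m hm
    have hlm : ((l m : ℝ)) ≠ 0 := by positivity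
    field_simp
  have htR : Tendsto (fun m => (t m : ℝ)) atTop atTop := by
    refine (Tendsto.pos_mul_atTop (by positivity : (0:ℝ) < θ * α) htm tendsto_natCast_atTop_atTop).congr' ?_
    filter_upwards [eventually_ge_atTop 1] with m hm
    have : ((m:ℝ)) ≠ 0 := by positivity
    field_simp
  have htN : Tendsto t atTop atTop := tendsto_natCast_atTop_iff.1 htR
  -- u ratios
  have hul : Tendsto (fun m => (u m : ℝ) / (l m)) atTop (𝓝 (1 - θ)) := by
    refine (ht.const_sub (1:ℝ)).congr' ?_
    filter_upwards [hl1] with m hm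
    have hlm : ((l m : ℝ)) ≠ 0 := by positivity
    rw [hcast m]
    field_simp
  have hum : Tendsto (fun m => (u m : ℝ) / m) atTop (𝓝 ((1 - θ) * α)) := by
    refine (hul.mul hl).congr' ?_
    filter_upwards [hl1] with m hm
    have hlm : ((l m : ℝ)) ≠ 0 := by positivity
    field_simp
  have huR : Tendsto (fun m => (u m : ℝ)) atTop atTop := by
    refine (Tendsto.pos_mul_atTop (by nlinarith : (0:ℝ) < (1 - θ) * α) hum tendsto_natCast_atTop_atTop).congr' ?_
    filter_upwards [eventually_ge_atTop 1] with m hm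
    have : ((m:ℝ)) ≠ 0 := by positivity
    field_simp
  have huN : Tendsto u atTop atTop := tendsto_natCast_atTop_iff.1 huR
  -- error terms
  have herr : ∀ (v : ℕ → ℕ), Tendsto v atTop atTop → ∀ {c : ℝ},
      Tendsto (fun m => (v m : ℝ) / m) atTop (𝓝 c) →
      Tendsto (fun m => (Real.log (v m).factorial - v m * Real.log (v m) + v m) / m) atTop (𝓝 0) := by
    intro v hv c hvc
    have h0 := (stirling_err.comp hv).mul hvc
    rw [zero_mul] at h0
    refine h0.congr' ?_
    filter_upwards [(hv.eventually_ge_atTop 1), eventually_ge_atTop 1] with m hm hm1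
    have h1 : ((v m : ℝ)) ≠ 0 := by
      have : (1:ℝ) ≤ (v m : ℝ) := by exact_mod_cast hm
      positivity
    simp only [Function.comp_apply]
    rw [div_mul_div_comm,
      mul_comm (Real.log ((v m).factorial) - (v m : ℝ) * Real.log (v m) + (v m : ℝ)) ((v m : ℝ)),
      mul_div_mul_left _ _ h1]
  have T3 := herr l hlN hl
  have T4 := herr t htN htm
  have T5 := herr u huN hum
  -- main log terms
  have hlogt : Tendsto (fun m => Real.log ((t m : ℝ) / (l m))) atTop (𝓝 (Real.log θ)) :=
    (Real.continuousAt_log hθ0.ne').tendsto.comp ht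
  have hlogu : Tendsto (fun m => Real.log ((u m : ℝ) / (l m))) atTop (𝓝 (Real.log (1 - θ))) :=
    (Real.continuousAt_log (by linarith : (1:ℝ) - θ ≠ 0)).tendsto.comp hul
  have T1 : Tendsto (fun m => (t m : ℝ) / m * Real.log ((t m : ℝ) / (l m))) atTop
      (𝓝 (θ * α * Real.log θ)) := htm.mul hlogt
  have T2 : Tendsto (fun m => (u m : ℝ) / m * Real.log ((u m : ℝ) / (l m))) atTop
      (𝓝 ((1 - θ) * α * Real.log (1 - θ))) := hum.mul hlogu
  have main := ((T1.add T2).neg.add ((T3.sub T4).sub T5))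
  have goal_eq : (fun m => -((t m : ℝ) / m * Real.log ((t m : ℝ) / (l m))
        + (u m : ℝ) / m * Real.log ((u m : ℝ) / (l m)))
      + (((Real.log (l m).factorial - l m * Real.log (l m) + l m) / m
        - (Real.log (t m).factorial - t m * Real.log (t m) + t m) / m)
        - (Real.log (u m).factorial - u m * Real.log (u m) + u m) / m))
      =ᶠ[atTop] (fun m => Real.log ((l m).choose (t m)) / m) := by
    filter_upwards [hl1, htN.eventually_ge_atTop 1, huN.eventually_ge_atTop 1,
      eventually_ge_atTop 1] with m hlm htm1 hum1 hm1
    have hl0 : (0:ℝ) < l m := by exact_mod_cast hlm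
    have ht0 : (0:ℝ) < t m := by exact_mod_cast htm1
    have hu0 : (0:ℝ) < u m := by exact_mod_cast hum1
    have hm0 : (0:ℝ) < m := by exact_mod_cast hm1
    have hch : ((l m).choose (t m) : ℝ)
        = (l m).factorial / ((t m).factorial * (u m).factorial) := by
      exact_mod_cast Nat.cast_choose ℝ (hle m)
    have hfl : (0:ℝ) < (l m).factorial := by exact_mod_cast (l m).factorial_pos
    have hft : (0:ℝ) < (t m).factorial := by exact_mod_cast (t m).factorial_pos
    have hfu : (0:ℝ) < (u m).factorial := by exact_mod_cast (u m).factorial_pos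
    rw [hch, Real.log_div hfl.ne' (by positivity), Real.log_mul hft.ne' hfu.ne']
    have hltu : (l m : ℝ) = (t m : ℝ) + (u m : ℝ) := by rw [hcast m]; ring
    have e1 : Real.log ((t m : ℝ) / (l m)) = Real.log (t m) - Real.log (l m) :=
      Real.log_div ht0.ne' hl0.ne'
    have e2 : Real.log ((u m : ℝ) / (l m)) = Real.log (u m) - Real.log (l m) :=
      Real.log_div hu0.ne' hl0.ne'
    rw [e1, e2]
    linear_combination ((1 - Real.log (l m)) * hltu) / (m:ℝ)
  have := main.congr' goal_eq
  convert this using 2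
  simp only [Hent]
  ring
lemma sum_all {n σ : ℕ} (β : Fin n → Fin σ) (W : Fin σ → ℝ) :
    ∑ x ∈ (univ : Finset (Fin n → Bool)), ∏ j, (if x j then W (β j) else 1)
      = ∏ i, (1 + W i) ^ #(univ.filter fun j => β j = i) := by
  rw [← Fintype.piFinset_univ,
    ← Finset.prod_univ_sum (fun _ => (univ : Finset Bool)) (fun j y => if y then W (β j) else 1)]
  have h1 : ∀ j : Fin n, (∑ y ∈ (univ : Finset Bool), (if y then W (β j) else 1))
      = 1 + W (β j) := by
    intro j
    rw [Fintype.sum_bool]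
    simp [add_comm]
  rw [Finset.prod_congr rfl (fun j _ => h1 j),
    ← Finset.prod_fiberwise univ β (fun j => 1 + W (β j))]
  refine Finset.prod_congr rfl (fun i _ => ?_)
  rw [Finset.prod_congr rfl (fun j hj => by rw [(mem_filter.1 hj).2]), Finset.prod_const]

lemma fiber_card {n σ : ℕ} (l : Fin σ → ℕ) (hl : ∑ i, l i = n) (β : Fin n → Fin σ)
    (hb : ∀ j : Fin n, ∀ i, β j = i ↔
      (∑ k ∈ univ.filter (fun k => k < i), l k) ≤ j.val ∧
        j.val < (∑ k ∈ univ.filter (fun k => k < i), l k) + l i) :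
    ∀ i, #(univ.filter fun j => β j = i) = l i := by
  intro i
  set c := ∑ k ∈ univ.filter (fun k => k < i), l k with hc
  have hcn : c + l i ≤ n := by
    rw [← hl]
    have h1 : c + l i = ∑ k ∈ insert i (univ.filter (fun k => k < i)), l k := by
      rw [Finset.sum_insert (by simp), add_comm]
    rw [h1]
    exact Finset.sum_le_sum_of_subset (subset_univ _)
  have heq : univ.filter (fun j : Fin n => β j = i)
      = (Finset.Ico c (c + l i)).attachFin
          (fun m hm => lt_of_lt_of_le (Finset.mem_Ico.1 hm).2 hcn) := by
    ext j
    simp only [mem_filter, mem_univ, true_and, Finset.mem_attachFin, Finset.mem_Ico]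
    exact hb j i
  rw [heq, Finset.card_attachFin, Nat.card_Ico]
  omega

lemma card_boolfun {J : Type*} [Fintype J] [DecidableEq J] (S : Finset J) (t : ℕ) :
    #(univ.filter (fun y : J → Bool =>
      (∀ j, y j = true → j ∈ S) ∧ #(univ.filter (fun j => y j = true)) = t))
      = (#S).choose t := by
  rw [← card_powersetCard]
  apply card_bij (fun (y : J → Bool) _ => univ.filter (fun j => y j = true))
  · intro y hy
    simp only [mem_filter, mem_univ, true_and] at hy
    rw [mem_powersetCard]
    exact ⟨fun j hj => hy.1 j (by simpa using hj), hy.2⟩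
  · intro y hy y' hy' h
    funext j
    have := Finset.ext_iff.1 h j
    simp only [mem_filter, mem_univ, true_and] at this
    by_cases h1 : y j = true
    · rw [h1, (this.1 h1).symm]
    · cases hj' : y' j
      · rw [eq_comm] at h1; simpa using h1
      · exact absurd (this.2 hj') h1
  · intro A hA
    rw [mem_powersetCard] at hA
    refine ⟨fun j => decide (j ∈ A), ?_, ?_⟩
    · simp only [mem_filter, mem_univ, true_and, decide_eq_true_eq]
      exact ⟨fun j hj => hA.1 hj, by rw [← hA.2]; congr 1; ext j; simp⟩
    · ext j; simp

lemma blocksum {J : Type*} [Fintype J] [DecidableEq J] (S : Finset J) (w : ℝ) (t : ℕ)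
    (F : Finset (J → Bool)) (hF : ∀ y, y ∈ F ↔
      ((∀ j, y j = true → j ∈ S) ∧ #(univ.filter (fun j => y j = true)) = t)) :
    ∑ y ∈ F, ∏ j ∈ S, (if y j then w else 1) = ((#S).choose t : ℝ) * w ^ t := by
  have hFeq : F = univ.filter (fun y : J → Bool =>
      (∀ j, y j = true → j ∈ S) ∧ #(univ.filter (fun j => y j = true)) = t) := by
    ext y
    simp only [mem_filter, mem_univ, true_and]
    exact hF y
  rw [hFeq]
  rw [Finset.sum_congr rfl (g := fun _ => w ^ t), sum_const, card_boolfun, nsmul_eq_mul]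
  intro y hy
  simp only [mem_filter, mem_univ, true_and] at hy
  rw [Finset.prod_ite (fun _ => w) (fun _ => 1), Finset.prod_const, Finset.prod_const,
    one_pow, mul_one]
  congr 1
  rw [← hy.2]
  congr 1
  ext j
  simp only [mem_filter, mem_univ, true_and]
  exact ⟨fun h => h.2, fun h => ⟨hy.1 j h, h⟩⟩

lemma lower_bound {n σ : ℕ} (β : Fin n → Fin σ) (w : Fin σ → ℝ) (hw : ∀ i, 0 ≤ w i)
    (t : Fin σ → ℕ) (T : ℕ) (hsum : ∑ i, t i ≤ T) :
    ∏ i, (((#(univ.filter fun j => β j = i)).choose (t i) : ℝ) * w i ^ t i)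
      ≤ ∑ x ∈ univ.filter (fun x : Fin n → Bool => (∑ j, if x j then 1 else 0) ≤ T),
          ∏ j, (if x j then w (β j) else 1) := by
  classical
  set S : Fin σ → Finset (Fin n) := fun i => univ.filter (fun j => β j = i) with hS
  set B : Fin σ → Finset (Fin n → Bool) := fun i =>
    univ.filter (fun y => (∀ j, y j = true → j ∈ S i)
      ∧ #(univ.filter fun j => y j = true) = t i) with hB
  set Φ : (Fin σ → (Fin n → Bool)) → (Fin n → Bool) := fun y j => y (β j) j with hΦ
  -- support and count facts for members of B i
  have hmemB : ∀ i, ∀ y ∈ B i, (∀ j, y j = true → β j = i)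
      ∧ #(univ.filter fun j => y j = true) = t i := by
    intro i y hy
    simp only [hB, mem_filter, mem_univ, true_and, hS] at hy
    exact ⟨fun j hj => by simpa using (hy.1 j hj), hy.2⟩
  -- step 1 : product of blocksums
  have step1 : ∏ i, (((#(S i)).choose (t i) : ℝ) * w i ^ t i)
      = ∑ y ∈ Fintype.piFinset B, ∏ i, ∏ j ∈ S i, (if y i j then w i else 1) := by
    rw [← Finset.prod_univ_sum B (fun i yi => ∏ j ∈ S i, (if yi j then w i else 1))]
    refine Finset.prod_congr rfl (fun i _ => ?_)
    refine (blocksum (S i) (w i) (t i) (B i) (fun y => ?_)).symm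
    simp only [hB, mem_filter, mem_univ, true_and]
  -- step 2 : per-y identification with the big product
  have step2 : ∀ y ∈ Fintype.piFinset B,
      ∏ i, ∏ j ∈ S i, (if y i j then w i else 1) = ∏ j, (if Φ y j then w (β j) else 1) := by
    intro y hy
    rw [← Finset.prod_fiberwise univ β (fun j => if Φ y j then w (β j) else 1)]
    refine Finset.prod_congr rfl (fun i _ => Finset.prod_congr rfl (fun j hj => ?_))
    have hji : β j = i := (mem_filter.1 hj).2
    simp only [hΦ, hji]
  -- injectivity of Φ on piFinset B
  have hinj : Set.InjOn Φ (Fintype.piFinset B) := by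
    intro y hy y' hy' h
    rw [Finset.mem_coe, Fintype.mem_piFinset] at hy hy'
    funext i j
    by_cases hji : β j = i
    · have := congrFun h j
      simp only [hΦ, hji] at this
      exact this
    · have h1 : y i j = false := by
        cases hc : y i j
        · rfl
        · exact absurd ((hmemB i _ (hy i)).1 j hc) hji
      have h2 : y' i j = false := by
        cases hc : y' i j
        · rfl
        · exact absurd ((hmemB i _ (hy' i)).1 j hc) hji
      rw [h1, h2]
  -- the image is inside the constraint set
  have himg : ∀ y ∈ Fintype.piFinset B,
      Φ y ∈ univ.filter (fun x : Fin n → Bool => (∑ j, if x j then 1 else 0) ≤ T) := by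
    intro y hy
    rw [Fintype.mem_piFinset] at hy
    simp only [mem_filter, mem_univ, true_and]
    have hcount : (∑ j, if Φ y j then 1 else 0) = ∑ i, t i := by
      rw [← Finset.sum_fiberwise univ β (fun j => if Φ y j then 1 else 0)]
      refine Finset.sum_congr rfl (fun i _ => ?_)
      have h1 : ∀ j ∈ univ.filter (fun j => β j = i), (if Φ y j then 1 else 0)
          = (if y i j then 1 else 0) := by
        intro j hj
        have hji : β j = i := (mem_filter.1 hj).2
        simp only [hΦ, hji]
      rw [Finset.sum_congr rfl h1, Finset.sum_boole]
      have h2 : (univ.filter (fun j => β j = i)).filter (fun j => y i j = true)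
          = univ.filter (fun j => y i j = true) := by
        ext j
        simp only [mem_filter, mem_univ, true_and]
        refine ⟨fun h => h.2, fun h => ⟨?_, h⟩⟩
        exact (hmemB i _ (hy i)).1 j h
      rw [h2, (hmemB i _ (hy i)).2]
      exact Nat.cast_id _
    rw [hcount]
    exact hsum
  calc ∏ i, (((#(S i)).choose (t i) : ℝ) * w i ^ t i)
      = ∑ y ∈ Fintype.piFinset B, ∏ j, (if Φ y j then w (β j) else 1) := by
        rw [step1]; exact Finset.sum_congr rfl step2
    _ = ∑ x ∈ (Fintype.piFinset B).image Φ, ∏ j, (if x j then w (β j) else 1) := by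
        rw [Finset.sum_image (f := fun x : Fin n → Bool => ∏ j, (if x j then w (β j) else 1))
          (fun y hy y' hy' h => hinj (Finset.mem_coe.2 hy) (Finset.mem_coe.2 hy') h)]
    _ ≤ _ := by
        refine Finset.sum_le_sum_of_subset_of_nonneg ?_ (fun x _ _ => ?_)
        · intro x hx
          obtain ⟨y, hy, rfl⟩ := Finset.mem_image.1 hx
          exact himg y hy
        · exact Finset.prod_nonneg (fun j _ => by split <;> [exact hw (β j); norm_num])
lemma exists_lam (σ : ℕ) (w a : Fin σ → ℝ) (hw : ∀ i, 1 ≤ w i) (ha : ∀ i, 0 < a i)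
    (hsuma : ∑ i, a i = 1) (μ2 : ℝ) (h0 : 0 < μ2) (h1 : μ2 < 1/2) :
    ∃ lam ≤ 0, ∑ i, a i * (w i * Real.exp lam / (1 + w i * Real.exp lam)) = μ2 := by
  have hwpos : ∀ i, (0:ℝ) < w i := fun i => lt_of_lt_of_le one_pos (hw i)
  set φ : ℝ → ℝ := fun lam => ∑ i, a i * (w i * Real.exp lam / (1 + w i * Real.exp lam))
    with hφ
  have hcont : Continuous φ := by
    apply continuous_finset_sum
    intro i _
    refine continuous_const.mul (Continuous.div
      (continuous_const.mul Real.continuous_exp)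
      (continuous_const.add (continuous_const.mul Real.continuous_exp))
      (fun x => ?_))
    have := (hwpos i)
    have := Real.exp_pos x
    positivity
  have hφ0 : 1/2 ≤ φ 0 := by
    have : ∀ i ∈ (univ : Finset (Fin σ)), a i * (1/2)
        ≤ a i * (w i * Real.exp 0 / (1 + w i * Real.exp 0)) := by
      intro i _
      refine mul_le_mul_of_nonneg_left ?_ (ha i).le
      rw [Real.exp_zero, mul_one]
      rw [div_le_div_iff₀ (by norm_num) (by have := hwpos i; positivity)] at *
      · nlinarith [hw i]
    calc (1/2 : ℝ) = ∑ i, a i * (1/2) := by rw [← Finset.sum_mul, hsuma]; ring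
      _ ≤ φ 0 := Finset.sum_le_sum this
  set C : ℝ := ∑ i, a i * w i with hC
  have hC1 : 1 ≤ C := by
    rw [hC, ← hsuma]
    exact Finset.sum_le_sum (fun i _ => le_mul_of_one_le_right (ha i).le (hw i))
  have hCpos : 0 < C := lt_of_lt_of_le one_pos hC1
  set lam0 : ℝ := Real.log (μ2 / C) with hlam0
  have hlam0neg : lam0 ≤ 0 := by
    apply Real.log_nonpos
    · positivity
    · rw [div_le_one hCpos]; linarith
  have hφlam0 : φ lam0 ≤ μ2 := by
    have hexp : Real.exp lam0 = μ2 / C := Real.exp_log (by positivity)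
    have hterm : ∀ i ∈ (univ : Finset (Fin σ)),
        a i * (w i * Real.exp lam0 / (1 + w i * Real.exp lam0))
          ≤ a i * (w i * Real.exp lam0) := by
      intro i _
      refine mul_le_mul_of_nonneg_left ?_ (ha i).le
      apply div_le_self
      · have := hwpos i; have := Real.exp_pos lam0; positivity
      · have := hwpos i; have := Real.exp_pos lam0; nlinarith
    calc φ lam0 ≤ ∑ i, a i * (w i * Real.exp lam0) := Finset.sum_le_sum hterm
      _ = C * (μ2 / C) := by
          rw [hexp, hC, Finset.sum_mul]
          exact Finset.sum_congr rfl (fun i _ => by ring)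
      _ = μ2 := by field_simp
  have hIVT := intermediate_value_Icc hlam0neg hcont.continuousOn
  have hμmem : μ2 ∈ Set.Icc (φ lam0) (φ 0) := ⟨hφlam0, by linarith⟩
  obtain ⟨lam, hlammem, hlameq⟩ := hIVT hμmem
  exact ⟨lam, hlammem.2, hlameq⟩

lemma upper_n {n σ : ℕ} (β : Fin n → Fin σ) (w : Fin σ → ℝ) (hw : ∀ i, 1 ≤ w i)
    (lam : ℝ) (hlam : lam ≤ 0) (T : ℕ) (L : Fin σ → ℕ)
    (hfib : ∀ i, #(univ.filter fun j => β j = i) = L i) :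
    ∑ x ∈ univ.filter (fun x : Fin n → Bool => (∑ j, if x j then 1 else 0) ≤ T),
        ∏ j, (if x j then w (β j) else 1)
      ≤ Real.exp (-(lam * T)) * ∏ i, (1 + w i * Real.exp lam) ^ (L i) := by
  have hwpos : ∀ i, (0:ℝ) < w i := fun i => lt_of_lt_of_le one_pos (hw i)
  have hstep : ∀ x ∈ univ.filter (fun x : Fin n → Bool => (∑ j, if x j then 1 else 0) ≤ T),
      ∏ j, (if x j then w (β j) else 1)
        ≤ Real.exp (-(lam * T)) * ∏ j, (if x j then w (β j) * Real.exp lam else 1) := by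
    intro x hx
    rw [mem_filter] at hx
    have hc : (∑ j, if x j then 1 else 0) ≤ T := hx.2
    set c : ℕ := ∑ j, if x j then 1 else 0 with hcdef
    have hA : (0:ℝ) ≤ ∏ j, (if x j then w (β j) else 1) := by
      refine Finset.prod_nonneg (fun j _ => ?_)
      by_cases h : x j = true <;> simp [h, (hwpos (β j)).le]
    have hsplit : ∏ j, (if x j then w (β j) * Real.exp lam else 1)
        = (∏ j, (if x j then w (β j) else 1)) * Real.exp lam ^ c := by
      have h1 : ∀ j : Fin n, (if x j then w (β j) * Real.exp lam else 1)
          = (if x j then w (β j) else 1) * (if x j then Real.exp lam else 1) := by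
        intro j; by_cases h : x j <;> simp [h]
      rw [Finset.prod_congr rfl (fun j _ => h1 j), Finset.prod_mul_distrib]
      congr 1
      rw [Finset.prod_ite (fun _ => Real.exp lam) (fun _ => (1:ℝ)), Finset.prod_const,
        Finset.prod_const, one_pow, mul_one]
      congr 1
      rw [hcdef]
      rw [Finset.sum_boole]
      exact (Nat.cast_id _).symm
    have h2 : (1:ℝ) ≤ Real.exp (-(lam * T)) * Real.exp lam ^ c := by
      rw [← Real.exp_nat_mul, ← Real.exp_add]
      have h3 := mul_le_mul_of_nonpos_left (show (c:ℝ) ≤ (T:ℝ) by exact_mod_cast hc) hlam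
      have h4 := Real.add_one_le_exp (-(lam * T) + c * lam)
      linarith
    calc ∏ j, (if x j then w (β j) else 1)
        = (∏ j, (if x j then w (β j) else 1)) * 1 := by ring
      _ ≤ (∏ j, (if x j then w (β j) else 1))
            * (Real.exp (-(lam * T)) * Real.exp lam ^ c) := by
          exact mul_le_mul_of_nonneg_left h2 hA
      _ = Real.exp (-(lam * T)) * ((∏ j, (if x j then w (β j) else 1)) * Real.exp lam ^ c) := by
          ring
      _ = Real.exp (-(lam * T)) * ∏ j, (if x j then w (β j) * Real.exp lam else 1) := by
          rw [hsplit]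
  calc ∑ x ∈ univ.filter (fun x : Fin n → Bool => (∑ j, if x j then 1 else 0) ≤ T),
        ∏ j, (if x j then w (β j) else 1)
      ≤ ∑ x ∈ univ.filter (fun x : Fin n → Bool => (∑ j, if x j then 1 else 0) ≤ T),
          Real.exp (-(lam * T)) * ∏ j, (if x j then w (β j) * Real.exp lam else 1) :=
        Finset.sum_le_sum hstep
    _ ≤ ∑ x ∈ (univ : Finset (Fin n → Bool)),
          Real.exp (-(lam * T)) * ∏ j, (if x j then w (β j) * Real.exp lam else 1) := by
        refine Finset.sum_le_sum_of_subset_of_nonneg (Finset.filter_subset _ _)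
          (fun x _ _ => ?_)
        have h5 : (0:ℝ) ≤ ∏ j, (if x j then w (β j) * Real.exp lam else 1) := by
          refine Finset.prod_nonneg (fun j _ => ?_)
          have := (hwpos (β j)).le
          have := (Real.exp_pos lam).le
          by_cases h : x j = true <;> simp [h] <;> positivity
        positivity
    _ = Real.exp (-(lam * T)) * ∑ x ∈ (univ : Finset (Fin n → Bool)),
          ∏ j, (if x j then w (β j) * Real.exp lam else 1) := by rw [← Finset.mul_sum]
    _ = Real.exp (-(lam * T)) * ∏ i, (1 + w i * Real.exp lam) ^ (L i) := by
        rw [sum_all β (fun i => w i * Real.exp lam)]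
        congr 1
        exact Finset.prod_congr rfl (fun i _ => by rw [hfib i])

lemma lower_n {n σ : ℕ} (β : Fin n → Fin σ) (w : Fin σ → ℝ) (hw : ∀ i, 1 ≤ w i)
    (T : ℕ) (L : Fin σ → ℕ) (hfib : ∀ i, #(univ.filter fun j => β j = i) = L i)
    (t : Fin σ → ℕ) (hle : ∀ i, t i ≤ L i) (hsum : ∑ i, t i ≤ T) :
    ∑ i, (Real.log ((L i).choose (t i)) + (t i : ℝ) * Real.log (w i))
      ≤ Real.log (∑ x ∈ univ.filter
          (fun x : Fin n → Bool => (∑ j, if x j then 1 else 0) ≤ T),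
        ∏ j, (if x j then w (β j) else 1)) := by
  have hwpos : ∀ i, (0:ℝ) < w i := fun i => lt_of_lt_of_le one_pos (hw i)
  have h0 := lower_bound β w (fun i => (hwpos i).le) t T hsum
  have h0' : ∏ i, (((L i).choose (t i) : ℝ) * w i ^ t i)
      ≤ ∑ x ∈ univ.filter (fun x : Fin n → Bool => (∑ j, if x j then 1 else 0) ≤ T),
          ∏ j, (if x j then w (β j) else 1) := by
    refine le_trans (le_of_eq ?_) h0
    exact Finset.prod_congr rfl (fun i _ => by rw [hfib i])
  have hterm : ∀ i, (0:ℝ) < ((L i).choose (t i) : ℝ) * w i ^ t i := by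
    intro i
    have h1 : 0 < (L i).choose (t i) := Nat.choose_pos (hle i)
    have h2 : (0:ℝ) < ((L i).choose (t i) : ℝ) := by exact_mod_cast h1
    have := hwpos i
    positivity
  have hprodpos : (0:ℝ) < ∏ i, (((L i).choose (t i) : ℝ) * w i ^ t i) :=
    Finset.prod_pos (fun i _ => hterm i)
  calc ∑ i, (Real.log ((L i).choose (t i)) + (t i : ℝ) * Real.log (w i))
      = Real.log (∏ i, (((L i).choose (t i) : ℝ) * w i ^ t i)) := by
        rw [Real.log_prod (fun i _ => (hterm i).ne')]
        refine Finset.sum_congr rfl (fun i _ => ?_)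
        rw [Real.log_mul (by exact_mod_cast (Nat.choose_pos (hle i)).ne')
          (by have := hwpos i; positivity), Real.log_pow]
    _ ≤ _ := Real.log_le_log hprodpos h0'

end RaoProof

/-- large deviations limit of the Rao bound (main convergence
theorem, Theorem `t:convergence` of the paper). -/
theorem rao_bound_large_deviations_limit
    (σ : ℕ) (hσ : 1 ≤ σ) (s : Fin σ → ℕ) (hs : ∀ i, 2 ≤ s i)
    (a : Fin σ → ℝ) (ha : ∀ i, 0 < a i) (hsuma : ∑ i, a i = 1)
    (μ : ℝ) (hμ : μ ∈ Set.Ioo (0 : ℝ) 1)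
    (l : ℕ → Fin σ → ℕ) (hl : ∀ n, ∑ i, l n i = n)
    (hla : ∀ i, Filter.Tendsto (fun n => (l n i : ℝ) / n) Filter.atTop (nhds (a i)))
    (b : ℕ → ℕ → Fin σ)
    (hb : ∀ n, ∀ j < n, ∀ i : Fin σ, b n j = i ↔
      (∑ k ∈ univ.filter (fun k => k < i), l n k) ≤ j ∧
        j < (∑ k ∈ univ.filter (fun k => k < i), l n k) + l n i)
    (T : ℕ → ℕ)
    (hT : Filter.Tendsto (fun n => (T n : ℝ) / n) Filter.atTop (nhds (μ / 2))) :
    Filter.Tendsto (fun n : ℕ => (1 / (n : ℝ)) * Real.log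
        (∑ x ∈ univ.filter (fun x : Fin n → Bool =>
            (∑ j, if x j then 1 else 0) ≤ T n),
          ∏ j : Fin n, (if x j then (s (b n j.val) : ℝ) - 1 else 1)))
      Filter.atTop
      (nhds (sSup {v : ℝ | ∃ θ : Fin σ → ℝ,
        (∀ i, θ i ∈ Set.Ioo (0 : ℝ) 1) ∧ (∑ i, a i * θ i) = μ / 2 ∧
        v = ∑ i, a i * (θ i * Real.log ((s i : ℝ) - 1) + Hent (θ i))})) := by
  classical
  open RaoProof Real Filter Topology in
  obtain ⟨hμ0, hμ1⟩ := hμ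
  set w : Fin σ → ℝ := fun i => (s i : ℝ) - 1 with hwdef
  have hw1 : ∀ i, (1:ℝ) ≤ w i := by
    intro i
    have h2 : (2:ℝ) ≤ (s i : ℝ) := by exact_mod_cast hs i
    simp only [hwdef]; linarith
  obtain ⟨lam, hlam0, hlamsum⟩ := RaoProof.exists_lam σ w a hw1 ha hsuma (μ/2)
    (by linarith) (by linarith)
  set θs : Fin σ → ℝ := fun i => w i * Real.exp lam / (1 + w i * Real.exp lam) with hθsdef
  have hθmem : ∀ i, θs i ∈ Set.Ioo (0:ℝ) 1 := fun i => RaoProof.theta_mem (hw1 i)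
  set Z : Fin σ → ℝ := fun i => Real.log (1 + w i * Real.exp lam) with hZdef
  set V : ℝ := ∑ i, a i * (θs i * Real.log (w i) + Hent (θs i)) with hVdef
  have hVZ : V = ∑ i, a i * Z i - lam * (μ/2) := by
    rw [hVdef, ← hlamsum, Finset.mul_sum, ← Finset.sum_sub_distrib]
    refine Finset.sum_congr rfl (fun i _ => ?_)
    have hte := RaoProof.theta_eq (lam := lam) (hw1 i)
    calc a i * (θs i * Real.log (w i) + Hent (θs i))
        = a i * (Z i - lam * θs i) := by rw [hθsdef, hZdef]; rw [hte]
      _ = a i * Z i - lam * (a i * θs i) := by ring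
  -- identify the sSup
  have hSup : sSup {v : ℝ | ∃ θ : Fin σ → ℝ,
      (∀ i, θ i ∈ Set.Ioo (0 : ℝ) 1) ∧ (∑ i, a i * θ i) = μ / 2 ∧
      v = ∑ i, a i * (θ i * Real.log ((s i : ℝ) - 1) + Hent (θ i))} = V := by
    have hmemV : V ∈ {v : ℝ | ∃ θ : Fin σ → ℝ,
        (∀ i, θ i ∈ Set.Ioo (0 : ℝ) 1) ∧ (∑ i, a i * θ i) = μ / 2 ∧
        v = ∑ i, a i * (θ i * Real.log ((s i : ℝ) - 1) + Hent (θ i))} :=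
      ⟨θs, hθmem, hlamsum, hVdef⟩
    have hub : ∀ v ∈ {v : ℝ | ∃ θ : Fin σ → ℝ,
        (∀ i, θ i ∈ Set.Ioo (0 : ℝ) 1) ∧ (∑ i, a i * θ i) = μ / 2 ∧
        v = ∑ i, a i * (θ i * Real.log ((s i : ℝ) - 1) + Hent (θ i))}, v ≤ V := by
      rintro v ⟨θ, hθm, hθc, rfl⟩
      rw [hVZ, ← hθc, Finset.mul_sum, ← Finset.sum_sub_distrib]
      refine Finset.sum_le_sum (fun i _ => ?_)
      have hg := RaoProof.gibbs (lam := lam) (hw1 i) (hθm i)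
      calc a i * (θ i * Real.log ((s i : ℝ) - 1) + Hent (θ i))
          ≤ a i * (Z i - lam * θ i) := mul_le_mul_of_nonneg_left hg (ha i).le
        _ = a i * Z i - lam * (a i * θ i) := by ring
    exact le_antisymm (csSup_le ⟨V, hmemV⟩ hub) (le_csSup ⟨V, hub⟩ hmemV)
  rw [hSup]
  -- fiber cardinalities
  have hfib : ∀ n (i : Fin σ), #(univ.filter fun j : Fin n => b n j.val = i) = l n i := by
    intro n i
    exact RaoProof.fiber_card (l n) (hl n) (fun j => b n j.val)
      (fun j i' => hb n j.val j.isLt i') i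
  -- positivity of the sum
  have hE1 : ∀ n : ℕ, (1:ℝ) ≤ ∑ x ∈ univ.filter (fun x : Fin n → Bool =>
      (∑ j, if x j then 1 else 0) ≤ T n),
      ∏ j : Fin n, (if x j then (s (b n j.val) : ℝ) - 1 else 1) := by
    intro n
    have hmem : (fun _ : Fin n => false) ∈ univ.filter (fun x : Fin n → Bool =>
        (∑ j, if x j then 1 else 0) ≤ T n) := by simp
    have := Finset.single_le_sum
      (f := fun x : Fin n → Bool => ∏ j : Fin n, (if x j then (s (b n j.val) : ℝ) - 1 else 1))
      (fun x _ => Finset.prod_nonneg (fun j _ => by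
        by_cases h : x j = true
        · rw [if_pos h]
          have h2 : (2:ℝ) ≤ (s (b n j.val) : ℝ) := by exact_mod_cast hs (b n j.val)
          linarith
        · rw [if_neg h]
          norm_num)) hmem
    simpa using this
  have hEpos : ∀ n : ℕ, (0:ℝ) < ∑ x ∈ univ.filter (fun x : Fin n → Bool =>
      (∑ j, if x j then 1 else 0) ≤ T n),
      ∏ j : Fin n, (if x j then (s (b n j.val) : ℝ) - 1 else 1) :=
    fun n => lt_of_lt_of_le one_pos (hE1 n)
  rw [tendsto_order]
  constructor
  · -- LOWER BOUND
    intro c hc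
    -- continuity in the δ parameter
    have hLtend : Tendsto (fun d : ℝ => ∑ i, a i * ((1 - d) * θs i * Real.log (w i)
        + Hent ((1 - d) * θs i))) (𝓝[>] (0:ℝ)) (𝓝 V) := by
      have hV' : V = ∑ i, a i * ((1 - (0:ℝ)) * θs i * Real.log (w i)
          + Hent ((1 - (0:ℝ)) * θs i)) := by
        rw [hVdef]; refine Finset.sum_congr rfl (fun i _ => by norm_num)
      rw [hV']
      refine tendsto_finset_sum _ (fun i _ => ?_)
      obtain ⟨h0i, h1i⟩ := hθmem i
      have h1 : Tendsto (fun d : ℝ => (1 - d) * θs i) (𝓝[>] (0:ℝ)) (𝓝 (θs i)) := by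
        have h1' : Tendsto (fun d : ℝ => (1 - d) * θs i) (𝓝 (0:ℝ)) (𝓝 ((1 - 0) * θs i)) :=
          ((continuous_const.sub continuous_id).mul continuous_const).tendsto 0
        rw [show (1 - (0:ℝ)) * θs i = θs i by ring] at h1'
        exact h1'.mono_left nhdsWithin_le_nhds
      have hH : ContinuousAt Hent (θs i) := by
        have c1 : ContinuousAt (fun θ : ℝ => -θ * Real.log θ) (θs i) :=
          continuousAt_id.neg.mul (Real.continuousAt_log h0i.ne')
        have c2 : ContinuousAt (fun θ : ℝ => (1 - θ) * Real.log (1 - θ)) (θs i) := by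
          refine ContinuousAt.mul (continuousAt_const.sub continuousAt_id) ?_
          exact (Real.continuousAt_log (by linarith)).comp
            (continuousAt_const.sub continuousAt_id)
        exact c1.sub c2
      have hca : ContinuousAt (fun θ : ℝ => a i * (θ * Real.log (w i) + Hent θ)) (θs i) :=
        continuousAt_const.mul ((continuousAt_id.mul continuousAt_const).add hH)
      have := hca.tendsto.comp h1
      simpa [Function.comp_def] using this
    -- pick δ
    have hδex : ∃ d : ℝ, 0 < d ∧ d < 1 ∧ c < ∑ i, a i * ((1 - d) * θs i * Real.log (w i)
        + Hent ((1 - d) * θs i)) := by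
      have he1 := hLtend.eventually (eventually_gt_nhds hc)
      have he2 : ∀ᶠ d in 𝓝[>] (0:ℝ), d < 1 :=
        (eventually_lt_nhds one_pos).filter_mono nhdsWithin_le_nhds
      have he3 : ∀ᶠ d in 𝓝[>] (0:ℝ), 0 < d := eventually_mem_nhdsWithin
      obtain ⟨d, hd1, hd2, hd3⟩ := (he1.and (he2.and he3)).exists
      exact ⟨d, hd3, hd2, hd1⟩
    obtain ⟨δ, hδ0, hδ1, hδc⟩ := hδex
    set θ' : Fin σ → ℝ := fun i => (1 - δ) * θs i with hθ'def
    have hθ'mem : ∀ i, θ' i ∈ Set.Ioo (0:ℝ) 1 := by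
      intro i
      obtain ⟨p, q⟩ := hθmem i
      constructor
      · have : 0 < 1 - δ := by linarith
        simp only [hθ'def]
        positivity
      · simp only [hθ'def]
        nlinarith
    set tt : ℕ → Fin σ → ℕ := fun n i => ⌊θ' i * (l n i : ℝ)⌋₊ with httdef
    have htle : ∀ n i, tt n i ≤ l n i := by
      intro n i
      have h1 : θ' i * (l n i:ℝ) ≤ ((l n i : ℕ):ℝ) := by
        obtain ⟨p, q⟩ := hθ'mem i
        nlinarith [Nat.cast_nonneg (α := ℝ) (l n i)]
      calc tt n i = ⌊θ' i * (l n i:ℝ)⌋₊ := rfl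
        _ ≤ ⌊((l n i : ℕ):ℝ)⌋₊ := Nat.floor_mono h1
        _ = l n i := Nat.floor_natCast _
    have hlR : ∀ i, Tendsto (fun n : ℕ => ((l n i : ℕ):ℝ)) atTop atTop := by
      intro i
      refine (Tendsto.pos_mul_atTop (ha i) (hla i) tendsto_natCast_atTop_atTop).congr' ?_
      filter_upwards [eventually_ge_atTop 1] with m hm
      have hm0 : ((m:ℝ)) ≠ 0 := by
        have : (0:ℝ) < m := by exact_mod_cast hm
        exact this.ne'
      field_simp
    have hlN : ∀ i, Tendsto (fun n => l n i) atTop atTop :=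
      fun i => tendsto_natCast_atTop_iff.1 (hlR i)
    have htl : ∀ i, Tendsto (fun n => (tt n i : ℝ)/(l n i)) atTop (𝓝 (θ' i)) := by
      intro i
      have hup : ∀ᶠ n : ℕ in atTop, (tt n i : ℝ)/(l n i) ≤ θ' i := by
        filter_upwards [(hlN i).eventually_ge_atTop 1] with n hn
        have hl0 : (0:ℝ) < l n i := by exact_mod_cast hn
        rw [div_le_iff₀ hl0]
        exact Nat.floor_le (mul_nonneg (hθ'mem i).1.le (Nat.cast_nonneg _))
      have hlo : ∀ᶠ n : ℕ in atTop, θ' i - 1/(l n i : ℝ) ≤ (tt n i : ℝ)/(l n i) := by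
        filter_upwards [(hlN i).eventually_ge_atTop 1] with n hn
        have hl0 : (0:ℝ) < l n i := by exact_mod_cast hn
        have h2 : θ' i * (l n i : ℝ) - 1 < tt n i := Nat.sub_one_lt_floor _
        have h3 : θ' i - 1/(l n i:ℝ) = (θ' i * (l n i : ℝ) - 1)/(l n i) := by
          field_simp
        rw [h3]
        exact (div_le_div_iff_of_pos_right hl0).2 h2.le
      have hlim : Tendsto (fun n : ℕ => θ' i - 1/(l n i:ℝ)) atTop (𝓝 (θ' i)) := by
        have hinv : Tendsto (fun n : ℕ => 1/(l n i:ℝ)) atTop (𝓝 0) := by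
          simpa [one_div, Function.comp_def] using tendsto_inv_atTop_zero.comp (hlR i)
        simpa using tendsto_const_nhds.sub hinv
      exact tendsto_of_tendsto_of_tendsto_of_le_of_le' hlim tendsto_const_nhds hlo hup
    have htm : ∀ i, Tendsto (fun n => (tt n i : ℝ)/n) atTop (𝓝 (θ' i * a i)) := by
      intro i
      refine ((htl i).mul (hla i)).congr' ?_
      filter_upwards [(hlN i).eventually_ge_atTop 1] with n hn
      have hl0 : ((l n i : ℕ):ℝ) ≠ 0 := by
        have : (0:ℝ) < l n i := by exact_mod_cast hn
        exact this.ne'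
      field_simp
    have hsum_t : ∀ᶠ n : ℕ in atTop, ∑ i, tt n i ≤ T n := by
      have hsum_tend : Tendsto (fun n : ℕ => (T n : ℝ)/n - ∑ i, (tt n i:ℝ)/n) atTop
          (𝓝 (μ/2 - ∑ i, θ' i * a i)) :=
        hT.sub (tendsto_finset_sum _ (fun i _ => htm i))
      have hposlim : 0 < μ/2 - ∑ i, θ' i * a i := by
        have hsθ : ∑ i, θ' i * a i = (1 - δ) * (μ/2) := by
          rw [← hlamsum, Finset.mul_sum]
          exact Finset.sum_congr rfl (fun i _ => by simp only [hθ'def]; ring)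
        rw [hsθ]
        nlinarith
      filter_upwards [hsum_tend.eventually (eventually_gt_nhds hposlim),
        eventually_ge_atTop 1] with n h1 hn
      have hn0 : (0:ℝ) < n := by exact_mod_cast hn
      have h2 : (∑ i, (tt n i:ℝ)) / n < (T n:ℝ)/n := by
        rw [Finset.sum_div]
        linarith
      have h3 : (∑ i, (tt n i : ℝ)) < T n := (div_lt_div_iff_of_pos_right hn0).1 h2
      have h4 : ((∑ i, tt n i : ℕ) : ℝ) < ((T n : ℕ) : ℝ) := by push_cast; exact h3
      exact_mod_cast h4.le
    have hgl : ∀ i, Tendsto (fun n => Real.log ((l n i).choose (tt n i)) / n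
        + (tt n i:ℝ)/n * Real.log (w i)) atTop
        (𝓝 (a i * ((1 - δ) * θs i * Real.log (w i) + Hent ((1 - δ) * θs i)))) := by
      intro i
      have h1 := RaoProof.log_choose_tendsto (ha i) (hθ'mem i) (hla i) (htl i)
        (fun n => htle n i)
      have h2 := (htm i).mul_const (Real.log (w i))
      have h3 := h1.add h2
      have h4 : a i * Hent (θ' i) + θ' i * a i * Real.log (w i)
          = a i * ((1 - δ) * θs i * Real.log (w i) + Hent ((1 - δ) * θs i)) := by
        simp only [hθ'def]
        ring
      rw [h4] at h3
      exact h3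
    have hgsum : Tendsto (fun n : ℕ => ∑ i, (Real.log ((l n i).choose (tt n i)) / n
        + (tt n i:ℝ)/n * Real.log (w i))) atTop
        (𝓝 (∑ i, a i * ((1 - δ) * θs i * Real.log (w i) + Hent ((1 - δ) * θs i)))) :=
      tendsto_finset_sum _ (fun i _ => hgl i)
    filter_upwards [hgsum.eventually (eventually_gt_nhds hδc), hsum_t,
      eventually_ge_atTop 1] with n h1 h2 hn
    have hn0 : (0:ℝ) < n := by exact_mod_cast hn
    have hlow : ∑ i, (Real.log ((l n i).choose (tt n i)) + (tt n i : ℝ) * Real.log (w i))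
        ≤ Real.log (∑ x ∈ univ.filter
            (fun x : Fin n → Bool => (∑ j, if x j then 1 else 0) ≤ T n),
          ∏ j : Fin n, (if x j then (s (b n j.val) : ℝ) - 1 else 1)) :=
      RaoProof.lower_n (fun j : Fin n => b n j.val) w hw1 (T n) (l n) (hfib n) (tt n)
        (fun i => htle n i) h2
    calc c < ∑ i, (Real.log ((l n i).choose (tt n i)) / n
            + (tt n i:ℝ)/n * Real.log (w i)) := h1
      _ = (1/(n:ℝ)) * ∑ i, (Real.log ((l n i).choose (tt n i))
            + (tt n i : ℝ) * Real.log (w i)) := by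
          rw [Finset.mul_sum]
          exact Finset.sum_congr rfl (fun i _ => by ring)
      _ ≤ (1/(n:ℝ)) * Real.log (∑ x ∈ univ.filter
            (fun x : Fin n → Bool => (∑ j, if x j then 1 else 0) ≤ T n),
          ∏ j : Fin n, (if x j then (s (b n j.val) : ℝ) - 1 else 1)) :=
          mul_le_mul_of_nonneg_left hlow (by positivity)
  · -- UPPER BOUND
    intro c hc
    have hu : Tendsto (fun n : ℕ => -lam * ((T n:ℝ)/n) + ∑ i, ((l n i:ℝ)/n) * Z i)
        atTop (𝓝 (-lam * (μ/2) + ∑ i, a i * Z i)) :=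
      (hT.const_mul (-lam)).add (tendsto_finset_sum _ (fun i _ => (hla i).mul_const (Z i)))
    have hVval : -lam * (μ/2) + ∑ i, a i * Z i = V := by rw [hVZ]; ring
    rw [hVval] at hu
    have hev : ∀ᶠ n : ℕ in atTop, (1/(n:ℝ)) * Real.log (∑ x ∈ univ.filter
          (fun x : Fin n → Bool => (∑ j, if x j then 1 else 0) ≤ T n),
          ∏ j : Fin n, (if x j then (s (b n j.val) : ℝ) - 1 else 1))
        ≤ -lam * ((T n:ℝ)/n) + ∑ i, ((l n i:ℝ)/n) * Z i := by
      filter_upwards [eventually_ge_atTop 1] with n hn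
      have hn0 : (0:ℝ) < n := by exact_mod_cast hn
      have hub2 : ∑ x ∈ univ.filter (fun x : Fin n → Bool =>
            (∑ j, if x j then 1 else 0) ≤ T n),
          ∏ j : Fin n, (if x j then (s (b n j.val) : ℝ) - 1 else 1)
          ≤ Real.exp (-(lam * T n)) * ∏ i, (1 + w i * Real.exp lam) ^ (l n i) :=
        RaoProof.upper_n (fun j : Fin n => b n j.val) w hw1 lam hlam0 (T n) (l n) (hfib n)
      have hfacpos : ∀ i : Fin σ, (0:ℝ) < (1 + w i * Real.exp lam) ^ (l n i) := by
        intro i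
        have := hw1 i; have := Real.exp_pos lam
        positivity
      have hlogR : Real.log (Real.exp (-(lam * T n)) * ∏ i, (1 + w i * Real.exp lam) ^ (l n i))
          = -(lam * T n) + ∑ i, (l n i : ℝ) * Z i := by
        rw [Real.log_mul (Real.exp_ne_zero _) (Finset.prod_pos (fun i _ => hfacpos i)).ne',
          Real.log_exp, Real.log_prod (fun i _ => (hfacpos i).ne')]
        congr 1
        refine Finset.sum_congr rfl (fun i _ => ?_)
        rw [Real.log_pow, hZdef]
      calc (1/(n:ℝ)) * Real.log (∑ x ∈ univ.filter (fun x : Fin n → Bool =>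
              (∑ j, if x j then 1 else 0) ≤ T n),
            ∏ j : Fin n, (if x j then (s (b n j.val) : ℝ) - 1 else 1))
          ≤ (1/(n:ℝ)) * (-(lam * T n) + ∑ i, (l n i : ℝ) * Z i) := by
            refine mul_le_mul_of_nonneg_left ?_ (by positivity)
            rw [← hlogR]
            exact Real.log_le_log (hEpos n) hub2
        _ = -lam * ((T n:ℝ)/n) + ∑ i, ((l n i:ℝ)/n) * Z i := by
            rw [mul_add, Finset.mul_sum]
            congr 1
            · ring
            · exact Finset.sum_congr rfl (fun i _ => by ring)
    filter_upwards [hev, hu.eventually (eventually_lt_nhds hc)] with n h1 h2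
    exact lt_of_le_of_lt h1 h2
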